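/- Let A be a Poisson algebra over k and M a left Poisson A-module that is isomorphic to A as an A-module (i.e. free of rank one). Then there exists a Poisson derivation δ of A such that M ≅ ^δA as left Poisson modules. Moreover, δ is unique up to a log-Hamiltonian derivation: if M ≅ ^δA and M ≅ ^{δ'}A as left Poisson modules, then δ − δ' is a log-Hamiltonian derivation of A. -/

import Mathlib

/-! ### Basic Poisson algebra notions -/

/-- A Poisson algebra structure on a commutative `k`-algebra `A`:
a `k`-bilinear Lie bracket satisfying the Leibniz rule. -/
structure PoissonAlgebra (k A : Type*) [CommRing k] [CommRing A] [Algebra k A] where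
  br : A →ₗ[k] A →ₗ[k] A
  skew : ∀ a b, br a b = - br b a
  jacobi : ∀ a b c, br a (br b c) + br b (br c a) + br c (br a b) = 0
  leibniz : ∀ a b c, br (a * b) c = a * br b c + br a c * b

/-- A left Poisson module structure on an `A`-module `M`, with bracket `br a m = {a, m}`. -/
structure LeftPMod {k A : Type*} [CommRing k] [CommRing A] [Algebra k A]
    (P : PoissonAlgebra k A) (M : Type*) [AddCommGroup M] [Module k M] [Module A M]
    [IsScalarTower k A M] where
  br : A →ₗ[k] M →ₗ[k] M
  lie : ∀ a b m, br (P.br a b) m = br a (br b m) - br b (br a m)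
  mul : ∀ a b m, br (a * b) m = a • br b m + b • br a m
  act : ∀ a b m, br a (b • m) = P.br a b • m + b • br a m

/-- A right Poisson module structure on an `A`-module `M`, with bracket `br m a = {m, a}`. -/
structure RightPMod {k A : Type*} [CommRing k] [CommRing A] [Algebra k A]
    (P : PoissonAlgebra k A) (M : Type*) [AddCommGroup M] [Module k M] [Module A M]
    [IsScalarTower k A M] where
  br : M →ₗ[k] A →ₗ[k] M
  lie : ∀ m a b, br m (P.br a b) = br (br m a) b - br (br m b) a
  mul : ∀ m a b, br m (a * b) = a • br m b + b • br m a
  act : ∀ b m a, br (b • m) a = P.br b a • m + b • br m a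

/-- A Poisson derivation of a Poisson algebra. -/
structure PoissonDerivation {k A : Type*} [CommRing k] [CommRing A] [Algebra k A]
    (P : PoissonAlgebra k A) where
  d : A →ₗ[k] A
  leibniz : ∀ a b, d (a * b) = a * d b + d a * b
  compat : ∀ a b, d (P.br a b) = P.br (d a) b + P.br a (d b)

/-- A log-Hamiltonian derivation is one of the form `a ↦ u⁻¹ * {u, a}` for a unit `u`. -/
def PoissonDerivation.IsLogHamiltonian {k A : Type*} [CommRing k] [CommRing A] [Algebra k A]
    {P : PoissonAlgebra k A} (δ : PoissonDerivation P) : Prop :=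
  ∃ u : Aˣ, ∀ a : A, (u : A) * δ.d a = P.br (u : A) a

/-! ### STATEMENT 7:
If a left Poisson module `M` over a Poisson algebra `A` is free of rank one as an
`A`-module, then `M ≅ ^δA` for some Poisson derivation `δ`, and such a `δ` is unique
up to log-Hamiltonian derivations.  An isomorphism of left Poisson modules `M ≅ ^δA`
is an `A`-linear equivalence `e : M ≃ₗ[A] A` satisfying
`e {a, m}_M = {a, e m} + δ(a) * e m`, since the bracket of `^δA` is
`{a, b}_δ = {a, b} + δ(a) * b`. -/
theorem stmt_7 {k A : Type*} [Field k] [IsAlgClosed k] [CharZero k]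
    [CommRing A] [Algebra k A] (P : PoissonAlgebra k A)
    (M : Type*) [AddCommGroup M] [Module k M] [Module A M] [IsScalarTower k A M]
    (L : LeftPMod P M) (hfree : Nonempty (M ≃ₗ[A] A)) :
    (∃ (δ : PoissonDerivation P) (e : M ≃ₗ[A] A),
        ∀ (a : A) (m : M), e (L.br a m) = P.br a (e m) + δ.d a * e m) ∧
    (∀ (δ δ' : PoissonDerivation P),
        (∃ e : M ≃ₗ[A] A, ∀ (a : A) (m : M), e (L.br a m) = P.br a (e m) + δ.d a * e m) →
        (∃ e' : M ≃ₗ[A] A, ∀ (a : A) (m : M), e' (L.br a m) = P.br a (e' m) + δ'.d a * e' m) →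
        ∃ u : Aˣ, ∀ a : A, (u : A) * (δ.d a - δ'.d a) = P.br (u : A) a) := by
  obtain ⟨e0⟩ := hfree
  -- basic fact: {1, c} = 0 and {a, 1} = 0
  have hbr1 : ∀ c : A, P.br 1 c = 0 := by
    intro c
    have h := P.leibniz 1 1 c
    simp only [one_mul, mul_one] at h
    exact right_eq_add.mp h
  have hbra1 : ∀ a : A, P.br a 1 = 0 := by
    intro a; rw [P.skew]; rw [hbr1]; ring
  -- general helper: extract data from an iso satisfying the bracket law abstractly
  have esmul : ∀ (e : M ≃ₗ[A] A) (c : A) (x : M), e (c • x) = c * e x := by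
    intro e c x
    rw [map_smul, smul_eq_mul]
  have hm : ∀ (e : M ≃ₗ[A] A) (m : M), m = (e m) • (e.symm 1) := by
    intro e m
    apply e.injective
    rw [esmul, e.apply_symm_apply, mul_one]
  constructor
  · -- existence
    set m₀ : M := e0.symm 1 with hm₀
    have hem₀ : e0 m₀ = 1 := e0.apply_symm_apply 1
    set d : A →ₗ[k] A :=
      (e0.restrictScalars k : M →ₗ[k] A).comp (LinearMap.flip L.br m₀) with hd
    have hda : ∀ a : A, d a = e0 (L.br a m₀) := fun a => rfl
    have hLa : ∀ a : A, L.br a m₀ = d a • m₀ := by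
      intro a
      conv_lhs => rw [hm e0 (L.br a m₀)]
      rw [← hda]
    have key : ∀ (a : A) (m : M), e0 (L.br a m) = P.br a (e0 m) + d a * e0 m := by
      intro a m
      conv_lhs => rw [hm e0 m, L.act]
      rw [map_add, esmul, esmul, hem₀, mul_one, ← hda, mul_comm]
    refine ⟨⟨d, ?_, ?_⟩, e0, key⟩
    · intro a b
      rw [hda, L.mul, map_add, esmul, esmul, ← hda, ← hda, mul_comm (d a) b]
    · intro a b
      rw [hda, L.lie, map_sub, hLa b, hLa a, L.act, L.act, map_add, map_add,
        esmul, esmul, esmul, esmul, hem₀, mul_one, mul_one, ← hda, ← hda,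
        P.skew b (d a)]
      ring
  · -- uniqueness up to log-Hamiltonian
    rintro δ δ' ⟨e, he⟩ ⟨e', he'⟩
    set u : A := e' (e.symm 1) with hu
    set v : A := e (e'.symm 1) with hv
    have hvu : v * u = 1 := by
      have h1 : e (v • e.symm 1) = v := by
        rw [esmul, e.apply_symm_apply, mul_one]
      have h2 : v • e.symm 1 = e'.symm 1 := by
        apply e.injective
        rw [h1, hv]
      calc v * u = e' (v • e.symm 1) := by rw [esmul]
        _ = 1 := by rw [h2, e'.apply_symm_apply]
    refine ⟨⟨v, u, hvu, by rw [mul_comm]; exact hvu⟩, ?_⟩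
    intro a
    have h1 : e' (L.br a (e'.symm 1)) = δ'.d a := by
      rw [he', e'.apply_symm_apply, hbra1, mul_one, zero_add]
    have h2 : L.br a (e'.symm 1) = δ'.d a • (e'.symm 1) := by
      conv_lhs => rw [hm e' (L.br a (e'.symm 1))]
      rw [h1]
    have h3 := he a (e'.symm 1)
    rw [h2, esmul, ← hv] at h3
    have h4 : P.br v a = - P.br a v := by rw [P.skew]
    simp only [Units.val_mk]
    rw [h4]
    linear_combination -h3
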